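/- Let u ∈ ℂ* with e^u = 1 + u, A = [[0,1],[0,0]] and B = [[u,0],[0,0]]. Then for every nonzero t ∈ ℂ, exp(tA)·exp(B) ≠ exp(B)·exp(tA). -/

import Mathlib

open Matrix NormedSpace

lemma exp_sq_zero (x : Matrix (Fin 2) (Fin 2) ℂ) (hx : x ^ 2 = 0) :
    exp x = 1 + x := by
  rw [exp_eq_tsum (𝕂 := ℂ)]; simp only
  have h : ∀ n ∉ Finset.range 2, ((n.factorial : ℂ)⁻¹) • x ^ n = 0 := by
    intro n hn
    simp only [Finset.mem_range, not_lt] at hn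
    have : x ^ n = 0 := by
      calc x ^ n = x ^ 2 * x ^ (n - 2) := by rw [← pow_add]; congr 1; omega
      _ = 0 := by rw [hx, zero_mul]
    simp [this]
  rw [tsum_eq_sum h]
  simp [Finset.sum_range_succ]

theorem stmt_9 (u : ℂ) (hu : u ≠ 0) (hue : Complex.exp u = 1 + u) :
    let A : Matrix (Fin 2) (Fin 2) ℂ := !![0, 1; 0, 0]
    let B : Matrix (Fin 2) (Fin 2) ℂ := !![u, 0; 0, 0]
    ∀ t : ℂ, t ≠ 0 → exp (t • A) * exp B ≠ exp B * exp (t • A) := by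
  intro A B t ht h
  have hA2 : (t • A) ^ 2 = 0 := by
    show (t • A) ^ 2 = 0
    simp only [A, smul_pow]
    have : (!![0, 1; 0, 0] : Matrix (Fin 2) (Fin 2) ℂ) ^ 2 = 0 := by
      rw [pow_two]; ext i j; fin_cases i <;> fin_cases j <;>
        simp [Matrix.mul_apply, Fin.sum_univ_two]
    rw [this, smul_zero]
  have heA : exp (t • A) = !![1, t; 0, 1] := by
    rw [exp_sq_zero _ hA2]
    ext i j; fin_cases i <;> fin_cases j <;> simp [A, Matrix.one_apply]
  have hBdiag : B = Matrix.diagonal ![u, 0] := by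
    ext i j; fin_cases i <;> fin_cases j <;> simp [B, Matrix.diagonal]
  have heB : exp B = !![Complex.exp u, 0; 0, 1] := by
    rw [hBdiag, Matrix.exp_diagonal]
    ext i j; fin_cases i <;> fin_cases j <;>
      simp [Matrix.diagonal, Pi.coe_exp, Complex.exp_eq_exp_ℂ]
  rw [heA, heB] at h
  have h01 := congrFun (congrFun h 0) 1
  simp [Matrix.mul_apply, Fin.sum_univ_two] at h01
  have : Complex.exp u = 1 :=
    mul_right_cancel₀ ht (by linear_combination -h01)
  rw [hue] at this
  apply hu
  linear_combination this
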